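/- For every integer K ≥ 1 and all odd indices j < l with 1 ≤ j < l ≤ 2K+1, the log-canonical bracket of the cluster parametrization satisfies {s_j, s_l}_y = −s_j s_l, as an identity of rational functions of y on (ℂ*)^{2K}. -/

import Mathlib

noncomputable section

open Finset

/-- The space of cluster variables `(y_1, …, y_{2K})`; we use 1-based indexing, so the
vector has `2K+1` slots and slot `0` is a dummy unused coordinate. -/
abbrev YV (K : ℕ) := Fin (2*K+1) → ℂ

/-- Access `y_j` by its (1-based) natural-number index. -/
def yv (K : ℕ) (y : YV K) (j : ℕ) : ℂ := y ⟨j % (2*K+1), Nat.mod_lt _ (by omega)⟩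

/-- Partial derivative with respect to `y_i`. -/
def pY (K : ℕ) (i : Fin (2*K+1)) (f : YV K → ℂ) (y : YV K) : ℂ :=
  fderiv ℂ f y (Pi.single i 1)

/-- The log-canonical bracket
`{f, g}_y = (1/4) Σ_{i=1}^{2K−1} y_i y_{i+1} (∂f/∂y_i ∂g/∂y_{i+1} − ∂f/∂y_{i+1} ∂g/∂y_i)`. -/
def lcBr (K : ℕ) (f g : YV K → ℂ) (y : YV K) : ℂ :=
  (1/4 : ℂ) * ∑ i : Fin (2*K-1),
    yv K y ((i:ℕ)+1) * yv K y ((i:ℕ)+2) *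
      (pY K ⟨(i:ℕ)+1, by have := i.isLt; omega⟩ f y *
         pY K ⟨(i:ℕ)+2, by have := i.isLt; omega⟩ g y
       - pY K ⟨(i:ℕ)+2, by have := i.isLt; omega⟩ f y *
         pY K ⟨(i:ℕ)+1, by have := i.isLt; omega⟩ g y)

/-- `nestList [a₁, …, a_m] = 1 + a₁(1 + a₂(⋯(1 + a_m)⋯))`. -/
def nestList : List ℂ → ℂ
  | [] => 1
  | a :: t => 1 + a * nestList t

/-- The Stokes parameters `s_n`, `n = 1, …, 2K+2` (paper's 1-based indexing) of the
cluster parametrization: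
`s_1 = −y_1^{−2}`;
`s_{2k} = (1+y_{2k}²)·∏_{j=1}^{2k} y_j^{2(−1)^{j+1}}` for `k = 1, …, K`;
`s_{2k+1} = −(1+y_{2k+1}²)·∏_{j=1}^{2k+1} y_j^{2(−1)^{j}}` for `k = 1, …, K−1`;
`s_{2K+1} = −∏_{j=1}^{2K} y_j^{2(−1)^{j}}`;
`s_{2K+2} = y_1²·(1+y_2²(1+y_4²(⋯(1+y_{2K}²)⋯)))·∏_{j=1}^{K} y_{2j}^{−4}`. -/
def sY (K : ℕ) (n : ℕ) (y : YV K) : ℂ :=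
  if n = 1 then -(yv K y 1) ^ (-2 : ℤ)
  else if n = 2*K+1 then -∏ j ∈ range (2*K), (yv K y (j+1)) ^ ((-1:ℤ)^(j+1) * 2)
  else if n = 2*K+2 then
    (yv K y 1)^2 * nestList (List.ofFn fun k : Fin K => (yv K y (2*(k:ℕ)+2))^2)
      * ∏ j ∈ range K, (yv K y (2*(j+1))) ^ (-4 : ℤ)
  else if n % 2 = 0 then
    (1 + (yv K y n)^2) * ∏ j ∈ range n, (yv K y (j+1)) ^ ((-1:ℤ)^j * 2)
  else -((1 + (yv K y n)^2) * ∏ j ∈ range n, (yv K y (j+1)) ^ ((-1:ℤ)^(j+1) * 2))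

/-- `λ = ∏_{j=1}^K y_{2j}²`. -/
def lamY (K : ℕ) (y : YV K) : ℂ := ∏ j ∈ range K, (yv K y (2*(j+1)))^2

namespace ClusterAux
variable {K : ℕ}

def ix (K m : ℕ) : Fin (2*K+1) := ⟨m % (2*K+1), Nat.mod_lt _ (by omega)⟩

lemma yv_ix (z : YV K) (m : ℕ) : yv K z m = z (ix K m) := rfl

lemma ix_eq (m : ℕ) (h : m < 2*K+1) : ix K m = ⟨m, h⟩ := Fin.ext (Nat.mod_eq_of_lt h)

lemma ix_val (m : ℕ) (h : m < 2*K+1) : ((ix K m : Fin (2*K+1)) : ℕ) = m := Nat.mod_eq_of_lt h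

def prj (K : ℕ) (i : Fin (2*K+1)) : (YV K) →L[ℂ] ℂ :=
  ContinuousLinearMap.proj (R := ℂ) (φ := fun _ : Fin (2*K+1) => ℂ) i

lemma hasFDerivAt_yv_zpow (y : YV K) (m : ℕ) (c : ℤ) (h0 : y (ix K m) ≠ 0) :
    HasFDerivAt (fun z : YV K => (yv K z m) ^ c)
      (((c : ℂ) * (y (ix K m)) ^ (c-1)) • prj K (ix K m)) y := by
  show HasFDerivAt ((fun x : ℂ => x ^ c) ∘ prj K (ix K m)) _ y
  exact (hasDerivAt_zpow c _ (Or.inl h0)).comp_hasFDerivAt y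
    (ContinuousLinearMap.hasFDerivAt (prj K (ix K m)))

lemma hasFDerivAt_one_add_sq (y : YV K) (m : ℕ) :
    HasFDerivAt (fun z : YV K => 1 + (yv K z m) ^ 2)
      (((2 : ℂ) * (y (ix K m))) • prj K (ix K m)) y := by
  have h := ((hasDerivAt_pow 2 (y (ix K m))).comp_hasFDerivAt y
    (ContinuousLinearMap.hasFDerivAt (prj K (ix K m)))).const_add 1
  simpa [prj, yv_ix] using h

def Pf (K n : ℕ) : YV K → ℂ := fun z => ∏ t ∈ range n, (yv K z (t+1)) ^ ((-1:ℤ)^(t+1) * 2)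

lemma hasFDerivAt_Pf (y : YV K) (n : ℕ) (hn : n ≤ 2*K)
    (h0 : ∀ i : Fin (2*K+1), (i:ℕ) ≠ 0 → y i ≠ 0) :
    HasFDerivAt (Pf K n)
      (∑ t ∈ range n, (∏ s ∈ (range n).erase t, (yv K y (s+1)) ^ ((-1:ℤ)^(s+1)*2)) •
        ((((-1:ℤ)^(t+1)*2 : ℤ) : ℂ) * (y (ix K (t+1))) ^ ((-1:ℤ)^(t+1)*2 - 1)) •
          prj K (ix K (t+1))) y := by
  apply HasFDerivAt.finset_prod
  intro t ht
  apply hasFDerivAt_yv_zpow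
  apply h0
  have htn : t + 1 < 2*K+1 := by have := mem_range.mp ht; omega
  simp [ix, Nat.mod_eq_of_lt htn]

lemma single_ix (i : Fin (2*K+1)) (m : ℕ) (hm : m < 2*K+1) :
    Pi.single (M := fun _ : Fin (2*K+1) => ℂ) i 1 (ix K m) = if m = (i:ℕ) then 1 else 0 := by
  have hiff : (ix K m = i) ↔ (m = (i:ℕ)) := by rw [Fin.ext_iff, ix_val _ hm]
  simp only [Pi.single_apply, hiff]

lemma pY_Pf_gt (y : YV K) (n : ℕ) (hn : n ≤ 2*K)
    (h0 : ∀ i : Fin (2*K+1), (i:ℕ) ≠ 0 → y i ≠ 0)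
    (i : Fin (2*K+1)) (h2 : n < (i:ℕ)) : pY K i (Pf K n) y = 0 := by
  rw [pY, (hasFDerivAt_Pf y n hn h0).fderiv]
  simp only [ContinuousLinearMap.coe_sum', Finset.sum_apply, ContinuousLinearMap.smul_apply,
    prj, ContinuousLinearMap.proj_apply, smul_eq_mul]
  apply Finset.sum_eq_zero
  intro t ht
  have htn : t + 1 < 2*K+1 := by have := mem_range.mp ht; omega
  rw [single_ix i (t+1) htn, if_neg (by have := mem_range.mp ht; omega)]
  ring

lemma mul_pY_Pf (y : YV K) (n : ℕ) (hn : n ≤ 2*K)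
    (h0 : ∀ i : Fin (2*K+1), (i:ℕ) ≠ 0 → y i ≠ 0)
    (i : Fin (2*K+1)) (h1 : 1 ≤ (i:ℕ)) (h2 : (i:ℕ) ≤ n) :
    y i * pY K i (Pf K n) y = ((-1:ℂ)^(i:ℕ) * 2) * Pf K n y := by
  have hyi : y i ≠ 0 := h0 i (by omega)
  rw [pY, (hasFDerivAt_Pf y n hn h0).fderiv]
  simp only [ContinuousLinearMap.coe_sum', Finset.sum_apply, ContinuousLinearMap.smul_apply,
    prj, ContinuousLinearMap.proj_apply, smul_eq_mul]
  have hmem : (i:ℕ) - 1 ∈ range n := mem_range.mpr (by omega)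
  rw [Finset.sum_eq_single_of_mem ((i:ℕ)-1) hmem]
  · have hst : (i:ℕ) - 1 + 1 = (i:ℕ) := by omega
    have hix : ix K ((i:ℕ)-1+1) = i := by rw [hst]; exact Fin.ext (Nat.mod_eq_of_lt i.isLt)
    rw [single_ix i ((i:ℕ)-1+1) (by omega), if_pos hst, hix, hst]
    have hyvi : yv K y (i:ℕ) = y i := by rw [yv_ix]; congr 1; exact Fin.ext (Nat.mod_eq_of_lt i.isLt)
    have hcol : y i * (y i) ^ ((-1:ℤ)^(i:ℕ)*2 - 1) = (y i) ^ ((-1:ℤ)^(i:ℕ)*2) := by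
      rw [zpow_sub_one₀ hyi]
      field_simp
    simp only [Pf]
    rw [← Finset.mul_prod_erase (range n) (fun s => (yv K y (s+1)) ^ ((-1:ℤ)^(s+1)*2)) hmem,
      hst, hyvi]
    push_cast
    linear_combination ((-1:ℂ)^(i:ℕ) * 2 *
      (∏ s ∈ (range n).erase ((i:ℕ)-1), (yv K y (s+1)) ^ ((-1:ℤ)^(s+1)*2))) * hcol
  · intro t ht hne
    have htn : t + 1 < 2*K+1 := by have := mem_range.mp ht; omega
    rw [single_ix i (t+1) htn, if_neg (by omega)]
    ring

/-! ### unfolding `sY` in the odd cases -/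

lemma sY_one' (hK : 1 ≤ K) : sY K 1 = fun z : YV K => -((yv K z 1) ^ (-2:ℤ)) := by
  funext z
  rw [sY, if_pos rfl]

lemma sY_top (hK : 1 ≤ K) : sY K (2*K+1) = fun z : YV K => -(Pf K (2*K) z) := by
  funext z
  rw [sY, if_neg (by omega), if_pos rfl]
  rfl

lemma sY_mid (n : ℕ) (hodd : n % 2 = 1) (h3 : 3 ≤ n) (hlt : n < 2*K+1) :
    sY K n = fun z : YV K => -((1 + (yv K z n)^2) * Pf K n z) := by
  funext z
  rw [sY, if_neg (by omega), if_neg (by omega), if_neg (by omega), if_neg (by omega)]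
  rfl


/-! ### derivative facts for the odd Stokes parameters -/

variable (y : YV K)

lemma mul_zpow_sub_one' {a : ℂ} (h : a ≠ 0) (c : ℤ) : a * a ^ (c-1) = a ^ c := by
  rw [zpow_sub_one₀ h]; field_simp

/-- (A): for `1 ≤ i < n`, `y_i ∂_i s_n = 2(-1)^i s_n`. -/
lemma v_lt (h0 : ∀ i : Fin (2*K+1), (i:ℕ) ≠ 0 → y i ≠ 0) (hK : 1 ≤ K) (n : ℕ) (hodd : n % 2 = 1) (hn : n ≤ 2*K+1)
    (i : Fin (2*K+1)) (h1 : 1 ≤ (i:ℕ)) (hilt : (i:ℕ) < n) :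
    y i * pY K i (sY K n) y = (-1:ℂ)^(i:ℕ) * 2 * sY K n y := by
  by_cases htop : n = 2*K+1
  · subst htop
    obtain ⟨D, hPD⟩ : ∃ D, HasFDerivAt (Pf K (2*K)) D y :=
      ⟨_, hasFDerivAt_Pf y (2*K) le_rfl h0⟩
    have hDval : D (Pi.single i 1) = pY K i (Pf K (2*K)) y := by
      simp only [pY]; rw [hPD.fderiv]
    rw [sY_top hK]
    simp only [pY]
    have hneg : HasFDerivAt (fun z : YV K => -(Pf K (2*K) z)) (-D) y := hPD.neg
    rw [hneg.fderiv]
    simp only [ContinuousLinearMap.neg_apply]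
    rw [hDval]
    have hmul := mul_pY_Pf y (2*K) le_rfl h0 i h1 (by omega)
    linear_combination -hmul
  · have h3 : 3 ≤ n := by omega
    have hlt2 : n < 2*K+1 := by omega
    have hn2K : n ≤ 2*K := by omega
    obtain ⟨D, hPD⟩ : ∃ D, HasFDerivAt (Pf K n) D y := ⟨_, hasFDerivAt_Pf y n hn2K h0⟩
    have hDval : D (Pi.single i 1) = pY K i (Pf K n) y := by
      simp only [pY]; rw [hPD.fderiv]
    have hg := hasFDerivAt_one_add_sq y n
    have h2 : HasFDerivAt (fun z : YV K => -((1 + (yv K z n)^2) * Pf K n z))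
        (-((1 + (yv K y n)^2) • D +
          Pf K n y • (((2:ℂ) * (y (ix K n))) • prj K (ix K n)))) y := (hg.mul hPD).neg
    rw [sY_mid n hodd h3 hlt2]
    simp only [pY]
    rw [h2.fderiv]
    simp only [ContinuousLinearMap.neg_apply, ContinuousLinearMap.add_apply,
      ContinuousLinearMap.smul_apply, smul_eq_mul, prj, ContinuousLinearMap.proj_apply]
    rw [single_ix i n hlt2, if_neg (by omega), hDval]
    have hmul := mul_pY_Pf y n hn2K h0 i h1 (le_of_lt hilt)
    simp only [yv_ix] at hmul ⊢
    linear_combination (-(1 + (y (ix K n))^2)) * hmul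

/-- (B): for `n < i ≤ 2K` (with `n` odd, `n ≤ 2K-1`), `∂_i s_n = 0`. -/
lemma u_gt (h0 : ∀ i : Fin (2*K+1), (i:ℕ) ≠ 0 → y i ≠ 0) (n : ℕ) (hodd : n % 2 = 1) (hn : n ≤ 2*K-1)
    (i : Fin (2*K+1)) (hgt : n < (i:ℕ)) (hle : (i:ℕ) ≤ 2*K) :
    pY K i (sY K n) y = 0 := by
  have hK : 1 ≤ K := by omega
  by_cases h1 : n = 1
  · subst h1
    have hne : y (ix K 1) ≠ 0 := h0 _ (by rw [ix_val 1 (by omega)]; omega)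
    have hneg : HasFDerivAt (fun z : YV K => -((yv K z 1) ^ (-2:ℤ)))
        (-((((-2:ℤ) : ℂ) * (y (ix K 1)) ^ ((-2:ℤ)-1)) • prj K (ix K 1))) y :=
      (hasFDerivAt_yv_zpow y 1 (-2) hne).neg
    rw [sY_one' hK]
    simp only [pY]
    rw [hneg.fderiv]
    simp only [ContinuousLinearMap.neg_apply, ContinuousLinearMap.smul_apply, smul_eq_mul,
      prj, ContinuousLinearMap.proj_apply]
    rw [single_ix i 1 (by omega), if_neg (by omega)]
    ring
  · have h3 : 3 ≤ n := by omega
    have hlt2 : n < 2*K+1 := by omega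
    have hn2K : n ≤ 2*K := by omega
    obtain ⟨D, hPD⟩ : ∃ D, HasFDerivAt (Pf K n) D y := ⟨_, hasFDerivAt_Pf y n hn2K h0⟩
    have hDval : D (Pi.single i 1) = pY K i (Pf K n) y := by
      simp only [pY]; rw [hPD.fderiv]
    have hg := hasFDerivAt_one_add_sq y n
    have h2 : HasFDerivAt (fun z : YV K => -((1 + (yv K z n)^2) * Pf K n z))
        (-((1 + (yv K y n)^2) • D +
          Pf K n y • (((2:ℂ) * (y (ix K n))) • prj K (ix K n)))) y := (hg.mul hPD).neg
    rw [sY_mid n hodd h3 hlt2]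
    simp only [pY]
    rw [h2.fderiv]
    simp only [ContinuousLinearMap.neg_apply, ContinuousLinearMap.add_apply,
      ContinuousLinearMap.smul_apply, smul_eq_mul, prj, ContinuousLinearMap.proj_apply]
    rw [single_ix i n hlt2, if_neg (by omega), hDval,
      pY_Pf_gt y n hn2K h0 i (by omega)]
    ring

/-- (C): `y_1 ∂_1 s_n = -2 s_n` for odd `n ≤ 2K-1`. -/
lemma u_one (h0 : ∀ i : Fin (2*K+1), (i:ℕ) ≠ 0 → y i ≠ 0) (n : ℕ) (hodd : n % 2 = 1) (hn : n ≤ 2*K-1) :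
    y (ix K 1) * pY K (ix K 1) (sY K n) y = -2 * sY K n y := by
  have hK : 1 ≤ K := by omega
  have h1K : (1:ℕ) < 2*K+1 := by omega
  by_cases h1 : n = 1
  · subst h1
    have hne : y (ix K 1) ≠ 0 := h0 _ (by rw [ix_val 1 h1K]; omega)
    have hneg : HasFDerivAt (fun z : YV K => -((yv K z 1) ^ (-2:ℤ)))
        (-((((-2:ℤ) : ℂ) * (y (ix K 1)) ^ ((-2:ℤ)-1)) • prj K (ix K 1))) y :=
      (hasFDerivAt_yv_zpow y 1 (-2) hne).neg
    rw [sY_one' hK]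
    simp only [pY]
    rw [hneg.fderiv]
    simp only [ContinuousLinearMap.neg_apply, ContinuousLinearMap.smul_apply, smul_eq_mul,
      prj, ContinuousLinearMap.proj_apply]
    rw [single_ix (ix K 1) 1 h1K, if_pos (ix_val 1 h1K).symm]
    have hcol : y (ix K 1) * (y (ix K 1)) ^ ((-2:ℤ) - 1) = (y (ix K 1)) ^ (-2:ℤ) :=
      mul_zpow_sub_one' hne (-2)
    rw [show ((-2:ℤ) - 1) = (-3:ℤ) by norm_num] at hcol
    simp only [yv_ix]
    push_cast
    linear_combination (2:ℂ) * hcol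
  · have := v_lt y h0 hK n hodd (by omega) (ix K 1) (ix_val 1 h1K).symm.le
      (by rw [ix_val 1 h1K]; omega)
    rw [ix_val 1 h1K] at this
    simpa using this

end ClusterAux

open ClusterAux

/-- for odd indices `j < l` with `1 ≤ j < l ≤ 2K+1`,
`{s_j, s_l}_y = −s_j s_l`, identically on `(ℂ*)^{2K}`. -/
theorem cluster_bracket_odd_odd (K : ℕ) (hK : 1 ≤ K) (y : YV K)
    (hy : ∀ i : Fin (2*K+1), (i:ℕ) ≠ 0 → y i ≠ 0)
    (j l : ℕ) (hjodd : Odd j) (hlodd : Odd l) (hj1 : 1 ≤ j) (hjl : j < l) (hl : l ≤ 2*K+1) :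
    lcBr K (sY K j) (sY K l) y = -(sY K j y * sY K l y) := by
  have hjmod : j % 2 = 1 := Nat.odd_iff.mp hjodd
  have hlmod : l % 2 = 1 := Nat.odd_iff.mp hlodd
  have hj2K : j ≤ 2*K-1 := by omega
  have hl3 : 3 ≤ l := by omega
  set F : ℕ → ℂ := fun t =>
    2 * (-1:ℂ)^t * sY K l y * (y (ix K (t+1)) * pY K (ix K (t+1)) (sY K j) y) with hF
  have hterm : ∀ i : Fin (2*K-1),
      yv K y ((i:ℕ)+1) * yv K y ((i:ℕ)+2) *
        (pY K ⟨(i:ℕ)+1, by omega⟩ (sY K j) y * pY K ⟨(i:ℕ)+2, by omega⟩ (sY K l) y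
         - pY K ⟨(i:ℕ)+2, by omega⟩ (sY K j) y * pY K ⟨(i:ℕ)+1, by omega⟩ (sY K l) y)
      = F (i:ℕ) - F ((i:ℕ)+1) := by
    intro i
    have hiK : (i:ℕ) < 2*K-1 := i.isLt
    have p1 : (i:ℕ)+1 < 2*K+1 := by omega
    have p2 : (i:ℕ)+2 < 2*K+1 := by omega
    simp only [yv_ix, hF]
    rw [← ix_eq ((i:ℕ)+1) p1, ← ix_eq ((i:ℕ)+2) p2]
    rw [show (i:ℕ)+1+1 = (i:ℕ)+2 from rfl]
    rcases le_or_gt ((i:ℕ)+1) j with hle | hlt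
    · have hv1 := v_lt y hy hK l hlmod hl (ix K ((i:ℕ)+1))
        (by rw [ix_val _ p1]; omega) (by rw [ix_val _ p1]; omega)
      have hv2 := v_lt y hy hK l hlmod hl (ix K ((i:ℕ)+2))
        (by rw [ix_val _ p2]; omega) (by rw [ix_val _ p2]; omega)
      rw [ix_val _ p1] at hv1
      rw [ix_val _ p2] at hv2
      linear_combination
        (y (ix K ((i:ℕ)+1)) * pY K (ix K ((i:ℕ)+1)) (sY K j) y) * hv2
        - (y (ix K ((i:ℕ)+2)) * pY K (ix K ((i:ℕ)+2)) (sY K j) y) * hv1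
    · have hu1 := u_gt y hy j hjmod hj2K (ix K ((i:ℕ)+1))
        (by rw [ix_val _ p1]; omega) (by rw [ix_val _ p1]; omega)
      have hu2 := u_gt y hy j hjmod hj2K (ix K ((i:ℕ)+2))
        (by rw [ix_val _ p2]; omega) (by rw [ix_val _ p2]; omega)
      rw [hu1, hu2]
      ring
  have hstep1 : lcBr K (sY K j) (sY K l) y
      = (1/4 : ℂ) * ∑ i : Fin (2*K-1), (F (i:ℕ) - F ((i:ℕ)+1)) := by
    rw [lcBr]
    congr 1
    exact Finset.sum_congr rfl (fun i _ => hterm i)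
  have hstep2 : ∑ i : Fin (2*K-1), (F (i:ℕ) - F ((i:ℕ)+1)) = F 0 - F (2*K-1) := by
    rw [Fin.sum_univ_eq_sum_range (fun m => F m - F (m+1)) (2*K-1)]
    exact Finset.sum_range_sub' F (2*K-1)
  rw [hstep1, hstep2]
  have h1 := u_one y hy j hjmod hj2K
  have h2 : pY K (ix K (2*K-1+1)) (sY K j) y = 0 := by
    rw [show 2*K-1+1 = 2*K by omega]
    exact u_gt y hy j hjmod hj2K (ix K (2*K))
      (by rw [ix_val _ (by omega)]; omega) (ix_val _ (by omega)).le
  simp only [hF]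
  rw [h2]
  rw [show (0:ℕ)+1 = 1 from rfl]
  linear_combination (1/2 : ℂ) * sY K l y * h1
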